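/- Let ‖·‖ be a rotund norm on ℝ^d with unit ball B = B(0,1). For every η > 0 there exists δ > 0 such that for every x ∈ ℝ^d with ‖x‖ ≤ 1 + δ, the 'cap' conv(B ∪ {x}) \ B has (‖·‖-)diameter at most η. -/

import Mathlib

/-- Uniform convexity from rotundity in finite dimension, via compactness. -/
theorem unif_conv_aux (E : Type*) [NormedAddCommGroup E] [NormedSpace ℝ E]
    [FiniteDimensional ℝ E]
    (hrot : ∀ x y : E, ‖x‖ = 1 → ‖y‖ = 1 → x ≠ y → ‖(1 / 2 : ℝ) • (x + y)‖ < 1)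
    (ε : ℝ) (hε : 0 < ε) :
    ∃ ρ : ℝ, 0 < ρ ∧ ρ ≤ 1 ∧ ∀ u v : E, ‖u‖ ≤ 1 → ‖v‖ ≤ 1 → ε ≤ ‖u - v‖ →
      ‖(1 / 2 : ℝ) • (u + v)‖ ≤ 1 - ρ := by
  set K : Set (E × E) := {p | ‖p.1‖ ≤ 1 ∧ ‖p.2‖ ≤ 1 ∧ ε ≤ ‖p.1 - p.2‖} with hK
  rcases K.eq_empty_or_nonempty with hKe | hKn
  · refine ⟨1/2, by norm_num, by norm_num, fun u v hu hv huv => ?_⟩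
    exact absurd (show (u, v) ∈ K from ⟨hu, hv, huv⟩) (by simp [hKe])
  · have hKcl : IsClosed K := by
      apply IsClosed.inter (isClosed_le continuous_fst.norm continuous_const)
      exact IsClosed.inter (isClosed_le continuous_snd.norm continuous_const)
        (isClosed_le continuous_const (continuous_fst.sub continuous_snd).norm)
    have hKsub : K ⊆ Metric.closedBall (0 : E) 1 ×ˢ Metric.closedBall (0 : E) 1 := by
      rintro ⟨u, v⟩ ⟨hu, hv, -⟩
      exact ⟨by simpa [dist_zero_right] using hu, by simpa [dist_zero_right] using hv⟩
    have hKc : IsCompact K :=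
      ((isCompact_closedBall (0 : E) 1).prod (isCompact_closedBall (0 : E) 1)).of_isClosed_subset
        hKcl hKsub
    have hcont : Continuous fun p : E × E => ‖(1 / 2 : ℝ) • (p.1 + p.2)‖ := by fun_prop
    obtain ⟨⟨u₀, v₀⟩, hmem, hmax⟩ := hKc.exists_isMaxOn hKn hcont.continuousOn
    obtain ⟨hu₀, hv₀, huv₀⟩ := hmem
    have hM : ‖(1 / 2 : ℝ) • (u₀ + v₀)‖ < 1 := by
      by_cases h : ‖u₀‖ = 1 ∧ ‖v₀‖ = 1
      · refine hrot u₀ v₀ h.1 h.2 fun heq => ?_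
        rw [heq, sub_self, norm_zero] at huv₀; linarith
      · have h1 : ‖(1 / 2 : ℝ) • (u₀ + v₀)‖ ≤ (‖u₀‖ + ‖v₀‖) / 2 := by
          have hh : ‖(1 / 2 : ℝ)‖ = 1 / 2 := by
            rw [Real.norm_eq_abs]; norm_num
          rw [norm_smul, hh]
          linarith [norm_add_le u₀ v₀]
        have h2 : ‖u₀‖ < 1 ∨ ‖v₀‖ < 1 := by
          rcases not_and_or.mp h with h' | h'
          · exact Or.inl (lt_of_le_of_ne hu₀ h')
          · exact Or.inr (lt_of_le_of_ne hv₀ h')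
        rcases h2 with h' | h' <;> [linarith; linarith]
    refine ⟨1 - ‖(1 / 2 : ℝ) • (u₀ + v₀)‖, by linarith,
      by linarith [norm_nonneg ((1 / 2 : ℝ) • (u₀ + v₀))], fun u v hu hv huv => ?_⟩
    have := hmax (show (u, v) ∈ K from ⟨hu, hv, huv⟩)
    simp only [Set.mem_setOf_eq] at this
    linarith [this]

set_option maxHeartbeats 2000000 in
/-- For a rotund norm on a finite-dimensional space, the cap `conv(B ∪ {x}) \ B`
cut off by a point `x` of norm at most `1 + δ` has diameter at most `η`,
provided `δ` is small enough in terms of `η`. -/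
theorem small_cap_of_rotund (E : Type*) [NormedAddCommGroup E] [NormedSpace ℝ E]
    [FiniteDimensional ℝ E]
    (hrot : ∀ x y : E, ‖x‖ = 1 → ‖y‖ = 1 → x ≠ y → ‖(1 / 2 : ℝ) • (x + y)‖ < 1) :
    ∀ η : ℝ, 0 < η → ∃ δ : ℝ, 0 < δ ∧ ∀ x : E, ‖x‖ ≤ 1 + δ →
      Metric.diam (convexHull ℝ (Metric.closedBall (0 : E) 1 ∪ {x})
        \ Metric.closedBall (0 : E) 1) ≤ η := by
  intro η hη
  obtain ⟨ρ, hρ, hρ1, hunif⟩ := unif_conv_aux E hrot (η / 8) (by positivity)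
  refine ⟨min (ρ / 2) (min (η / 8) (ρ * η / 24)), by positivity, fun x hx => ?_⟩
  set δ : ℝ := min (ρ / 2) (min (η / 8) (ρ * η / 24)) with hδdef
  have hδpos : 0 < δ := by positivity
  have hδ1 : δ ≤ ρ / 2 := min_le_left _ _
  have hδ2 : δ ≤ η / 8 := le_trans (min_le_right _ _) (min_le_left _ _)
  have hδ3 : δ ≤ ρ * η / 24 := le_trans (min_le_right _ _) (min_le_right _ _)
  have hδhalf : δ ≤ 1 / 2 := by linarith
  by_cases hx1 : ‖x‖ ≤ 1
  · have hxin : x ∈ Metric.closedBall (0 : E) 1 := by simpa [dist_zero_right] using hx1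
    have : Metric.closedBall (0 : E) 1 ∪ {x} = Metric.closedBall (0 : E) 1 := by
      rw [Set.union_singleton, Set.insert_eq_self]; exact hxin
    rw [this, (convex_closedBall (0 : E) 1).convexHull_eq, Set.diff_self]
    simpa using hη.le
  · push_neg at hx1
    have hxpos : 0 < ‖x‖ := by linarith
    set xh : E := ‖x‖⁻¹ • x with hxh
    have hxxh : ‖x - xh‖ ≤ δ := by
      have : x - xh = (1 - ‖x‖⁻¹) • x := by rw [hxh]; module
      rw [this, norm_smul, Real.norm_eq_abs, abs_of_nonneg]
      · have h1 : (1 - ‖x‖⁻¹) * ‖x‖ = ‖x‖ - 1 := by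
          field_simp
        rw [h1]; linarith
      · have : ‖x‖⁻¹ ≤ 1 := by
          rw [inv_le_one_iff₀]; right; linarith
        linarith
    have key : ∀ p ∈ convexHull ℝ (Metric.closedBall (0 : E) 1 ∪ {x})
        \ Metric.closedBall (0 : E) 1, ‖p - xh‖ ≤ η / 2 := by
      rintro p ⟨hpc, hpB⟩
      have hp1 : 1 < ‖p‖ := by
        simp only [Metric.mem_closedBall, dist_zero_right, not_le] at hpB
        exact hpB
      rw [Set.union_singleton, convexHull_insert ⟨0, by simp⟩,
        (convex_closedBall (0 : E) 1).convexHull_eq] at hpc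
      rw [mem_convexJoin] at hpc
      obtain ⟨x', hx', z, hz, hseg⟩ := hpc
      rw [Set.mem_singleton_iff] at hx'
      rw [hx'] at hseg
      obtain ⟨a, b, ha, hb, hab, hp⟩ := hseg
      have hz1 : ‖z‖ ≤ 1 := by simpa [dist_zero_right] using hz
      -- main claim: ‖p - x‖ ≤ η / 4
      have hpx : ‖p - x‖ ≤ η / 4 := by
        by_contra hcon
        push_neg at hcon
        have hpxb : p - x = b • (z - x) := by
          rw [← hp]
          have hb1 : b = 1 - a := by linarith
          rw [hb1]; module
        have hzx3 : ‖z - x‖ ≤ 3 := by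
          have := norm_sub_le z x
          linarith
        have hbzx : b * ‖z - x‖ > η / 4 := by
          have := hcon
          rw [hpxb, norm_smul, Real.norm_eq_abs, abs_of_nonneg hb] at this
          linarith
        have hbb : b > η / 12 := by nlinarith
        have hzxη : ‖z - x‖ > η / 4 := by nlinarith
        -- auxiliary point v = (1+δ)⁻¹ • x ∈ B
        set v : E := (1 + δ)⁻¹ • x with hv
        have h1δ : (0:ℝ) < 1 + δ := by linarith
        have hvn : ‖v‖ ≤ 1 := by
          rw [hv, norm_smul, Real.norm_eq_abs, abs_of_pos (by positivity : (0:ℝ) < (1+δ)⁻¹)]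
          have h2 := mul_le_mul_of_nonneg_left hx (by positivity : (0:ℝ) ≤ (1+δ)⁻¹)
          rw [inv_mul_cancel₀ (ne_of_gt h1δ)] at h2
          exact h2
        have hxv : ‖x - v‖ ≤ δ := by
          have hxe : x - v = (1 - (1 + δ)⁻¹) • x := by rw [hv]; module
          have hinv : (1 + δ)⁻¹ ≤ 1 := by
            rw [inv_le_one_iff₀]; right; linarith
          rw [hxe, norm_smul, Real.norm_eq_abs, abs_of_nonneg (by linarith)]
          have heq : (1 - (1 + δ)⁻¹) * (1 + δ) = δ := by field_simp; ring
          have h2 := mul_le_mul_of_nonneg_left hx (by linarith : (0:ℝ) ≤ 1 - (1 + δ)⁻¹)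
          linarith
        have hzv : η / 8 ≤ ‖z - v‖ := by
          have h2 : z - x = z - v + (v - x) := by abel
          have h3 := norm_add_le (z - v) (v - x)
          rw [← h2] at h3
          have h4 : ‖v - x‖ = ‖x - v‖ := norm_sub_rev _ _
          linarith
        have hm : ‖(1 / 2 : ℝ) • (z + v)‖ ≤ 1 - ρ := hunif z v hz1 hvn hzv
        have hmx : ‖(1 / 2 : ℝ) • (z + x)‖ ≤ 1 - ρ + δ / 2 := by
          have he : (1 / 2 : ℝ) • (z + x) = (1 / 2 : ℝ) • (z + v) + (1 / 2 : ℝ) • (x - v) := by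
            module
          rw [he]
          have := norm_add_le ((1 / 2 : ℝ) • (z + v)) ((1 / 2 : ℝ) • (x - v))
          have h2 : ‖(1 / 2 : ℝ) • (x - v)‖ = (1 / 2) * ‖x - v‖ := by
            rw [norm_smul]; norm_num
          rw [h2] at this
          linarith
        rcases le_or_gt a (1 / 2) with hha | hha
        · -- p = (1-2a) • z + (2a) • ((1/2)•(z+x))
          have hpe : p = (1 - 2 * a) • z + (2 * a) • ((1 / 2 : ℝ) • (z + x)) := by
            rw [← hp]
            have hb1 : b = 1 - a := by linarith
            rw [hb1]; module
          have hapos : 0 < a := by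
            rcases lt_or_eq_of_le ha with h' | h'
            · exact h'
            · exfalso
              have hb1 : b = 1 := by linarith
              have hpz : p = z := by rw [← hp, ← h', hb1]; simp
              rw [hpz] at hp1; linarith
          have h4 : ‖((1 - 2 * a : ℝ)) • z‖ ≤ (1 - 2 * a) * 1 := by
            rw [norm_smul, Real.norm_eq_abs, abs_of_nonneg (by linarith : (0:ℝ) ≤ 1 - 2 * a)]
            exact mul_le_mul_of_nonneg_left hz1 (by linarith)
          have h5 : ‖((2 * a : ℝ)) • ((1 / 2 : ℝ) • (z + x))‖ ≤ (2 * a) * (1 - ρ + δ / 2) := by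
            rw [norm_smul, Real.norm_eq_abs, abs_of_nonneg (by linarith : (0:ℝ) ≤ 2 * a)]
            exact mul_le_mul_of_nonneg_left hmx (by linarith)
          have hbound : ‖p‖ ≤ (1 - 2 * a) * 1 + (2 * a) * (1 - ρ + δ / 2) := by
            rw [hpe]
            exact le_trans (norm_add_le _ _) (by linarith)
          nlinarith
        · -- p = (2-2a) • ((1/2)•(z+x)) + (2a-1) • x
          have hpe : p = (2 - 2 * a) • ((1 / 2 : ℝ) • (z + x)) + (2 * a - 1) • x := by
            rw [← hp]
            have hb1 : b = 1 - a := by linarith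
            rw [hb1]; module
          have ha1 : a ≤ 1 := by linarith
          have h4 : ‖((2 - 2 * a : ℝ)) • ((1 / 2 : ℝ) • (z + x))‖ ≤ (2 - 2 * a) * (1 - ρ + δ / 2) := by
            rw [norm_smul, Real.norm_eq_abs, abs_of_nonneg (by linarith : (0:ℝ) ≤ 2 - 2 * a)]
            exact mul_le_mul_of_nonneg_left hmx (by linarith)
          have h5 : ‖((2 * a - 1 : ℝ)) • x‖ ≤ (2 * a - 1) * (1 + δ) := by
            rw [norm_smul, Real.norm_eq_abs, abs_of_nonneg (by linarith : (0:ℝ) ≤ 2 * a - 1)]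
            exact mul_le_mul_of_nonneg_left hx (by linarith)
          have hbound : ‖p‖ ≤ (2 - 2 * a) * (1 - ρ + δ / 2) + (2 * a - 1) * (1 + δ) := by
            rw [hpe]
            exact le_trans (norm_add_le _ _) (by linarith)
          have hb12 : 1 - a > η / 12 := by linarith
          nlinarith
      calc ‖p - xh‖ ≤ ‖p - x‖ + ‖x - xh‖ := by
            have := norm_add_le (p - x) (x - xh)
            have h2 : p - x + (x - xh) = p - xh := by abel
            rw [h2] at this; exact this
        _ ≤ η / 4 + δ := by linarith
        _ ≤ η / 2 := by linarith
    apply Metric.diam_le_of_forall_dist_le hη.le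
    intro p hp q hq
    have h1 := key p hp
    have h2 := key q hq
    have : dist p q ≤ dist p xh + dist xh q := dist_triangle p xh q
    rw [dist_eq_norm, dist_eq_norm, dist_eq_norm] at this
    have h3 : ‖xh - q‖ = ‖q - xh‖ := norm_sub_rev _ _
    rw [dist_eq_norm]
    linarith
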